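/- arXiv:2010.02541 — 8 statements merged into one kernel-verified Lean document; each statement's English description precedes it below -/
import Mathlib

section
/- Let $\mathcal{A}$ be a finite family of finite sets of size at most $n$ on ground set $X$, and let $\mathcal{A}'\subseteq\mathcal{A}$. For a set $S\subseteq X$, let $\mathcal{A}(\bar S)$ denote the subfamily of sets in $\mathcal{A}$ disjoint from $S$. Then for any $\lambda>1$, $c_\lambda(\mathcal{A})\le\sum_{C\in\mathcal{C}(\mathcal{A}')}\lambda^{-|C|}c_\lambda(\mathcal{A}(\bar C))$, where $\mathcal{C}(\cdot)$ denotes the family of minimal covers of size at most $n$ and $c_\lambda(\mathcal{F})=\sum_{C\in\mathcal{C}(\mathcal{F})}\lambda^{-|C|}$. -/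
open Finset

variable {α : Type*}

/-- `C` is a cover of the family `𝓕`: it intersects every member. -/
def IsCover [DecidableEq α] (C : Finset α) (𝓕 : Finset (Finset α)) : Prop :=
  ∀ A ∈ 𝓕, (C ∩ A).Nonempty

/-- The family of all minimal covers of `𝓕` of size at most `n`. -/
noncomputable def minCovers [Fintype α] [DecidableEq α] (n : ℕ)
    (𝓕 : Finset (Finset α)) : Finset (Finset α) := by
  classical
  exact univ.filter (fun C => C.card ≤ n ∧ IsCover C 𝓕 ∧
    ∀ C' ⊆ C, IsCover C' 𝓕 → C' = C)

/-- `c_λ(𝓕) = ∑_{C ∈ 𝓒(𝓕)} λ^{-|C|}`. -/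
noncomputable def covWeight [Fintype α] [DecidableEq α] (n : ℕ) (lam : ℝ)
    (𝓕 : Finset (Finset α)) : ℝ :=
  ∑ C ∈ minCovers n 𝓕, lam ^ (-(C.card : ℤ))

/-- The covering number `τ(𝓕)`: minimum size of a cover. -/
noncomputable def covNum [DecidableEq α] (𝓕 : Finset (Finset α)) : ℕ :=
  sInf {k | ∃ C : Finset α, C.card = k ∧ IsCover C 𝓕}

lemma exists_min_subcover [DecidableEq α] (C : Finset α) (𝓕 : Finset (Finset α))
    (hC : IsCover C 𝓕) :
    ∃ C' ⊆ C, IsCover C' 𝓕 ∧ ∀ C'' ⊆ C', IsCover C'' 𝓕 → C'' = C' := by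
  classical
  set S := C.powerset.filter (fun D => IsCover D 𝓕) with hS
  have hCS : C ∈ S := by simp [hS, hC]
  obtain ⟨C', hC'S, hmin⟩ := S.exists_min_image Finset.card ⟨C, hCS⟩
  simp only [hS, mem_filter, mem_powerset] at hC'S
  refine ⟨C', hC'S.1, hC'S.2, fun C'' hsub hcov => ?_⟩
  have : C'' ∈ S := by
    simp only [hS, mem_filter, mem_powerset]
    exact ⟨hsub.trans hC'S.1, hcov⟩
  exact Finset.eq_of_subset_of_card_le hsub (hmin _ this)

theorem stmt1 [Fintype α] [DecidableEq α] (n : ℕ) (𝓐 𝓐' : Finset (Finset α))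
    (hA : ∀ A ∈ 𝓐, A.card ≤ n) (hsub : 𝓐' ⊆ 𝓐) (lam : ℝ) (hl : 1 < lam) :
    covWeight n lam 𝓐 ≤ ∑ C ∈ minCovers n 𝓐',
      lam ^ (-(C.card : ℤ)) * covWeight n lam (𝓐.filter (fun F => Disjoint F C)) := by
  classical
  have hlam0 : (0:ℝ) < lam := lt_trans one_pos hl
  have hlne : lam ≠ 0 := ne_of_gt hlam0
  -- decomposition
  have key : ∀ C ∈ minCovers n 𝓐, ∃ C' D : Finset α,
      C' ∈ minCovers n 𝓐' ∧ D ∈ minCovers n (𝓐.filter (fun F => Disjoint F C')) ∧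
      C' ⊆ C ∧ D = C \ C' := by
    intro C hC
    simp only [minCovers, mem_filter, mem_univ, true_and] at hC
    obtain ⟨hcard, hcov, hmin⟩ := hC
    have hcovA' : IsCover C 𝓐' := fun A hA' => hcov A (hsub hA')
    obtain ⟨C', hC'sub, hC'cov, hC'min⟩ := exists_min_subcover C 𝓐' hcovA'
    refine ⟨C', C \ C', ?_, ?_, hC'sub, rfl⟩
    · simp only [minCovers, mem_filter, mem_univ, true_and]
      exact ⟨le_trans (Finset.card_le_card hC'sub) hcard, hC'cov, hC'min⟩
    · simp only [minCovers, mem_filter, mem_univ, true_and]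
      have hDcov : IsCover (C \ C') (𝓐.filter (fun F => Disjoint F C')) := by
        intro A hAmem
        simp only [mem_filter] at hAmem
        obtain ⟨hA𝓐, hdisj⟩ := hAmem
        obtain ⟨x, hx⟩ := hcov A hA𝓐
        simp only [mem_inter] at hx
        refine ⟨x, ?_⟩
        simp only [mem_inter, mem_sdiff]
        exact ⟨⟨hx.1, fun hxC' => (disjoint_left.mp hdisj hx.2) hxC'⟩, hx.2⟩
      refine ⟨le_trans (Finset.card_le_card (Finset.sdiff_subset)) hcard, hDcov, ?_⟩
      intro D'' hD''sub hD''cov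
      have hunion : IsCover (C' ∪ D'') 𝓐 := by
        intro A hA𝓐
        by_cases h : (C' ∩ A).Nonempty
        · obtain ⟨x, hx⟩ := h
          simp only [mem_inter] at hx
          exact ⟨x, by simp [mem_inter, hx.1, hx.2]⟩
        · have hdisj : Disjoint A C' := by
            rw [Finset.disjoint_right]
            intro x hxC' hxA
            exact h ⟨x, mem_inter.mpr ⟨hxC', hxA⟩⟩
          have : A ∈ 𝓐.filter (fun F => Disjoint F C') := by
            simp [hA𝓐, hdisj]
          obtain ⟨x, hx⟩ := hD''cov A this
          simp only [mem_inter] at hx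
          exact ⟨x, by simp [mem_inter, hx.1, hx.2]⟩
      have hsubC : C' ∪ D'' ⊆ C :=
        Finset.union_subset hC'sub (hD''sub.trans Finset.sdiff_subset)
      have heq : C' ∪ D'' = C := hmin _ hsubC hunion
      apply Finset.Subset.antisymm hD''sub
      intro x hx
      simp only [mem_sdiff] at hx
      have : x ∈ C' ∪ D'' := heq ▸ hx.1
      rcases mem_union.mp this with h | h
      · exact absurd h hx.2
      · exact h
  -- choice function
  choose f g hf hg hfsub hgd using key
  -- rewrite RHS as sum over sigma
  have hterm : ∀ C' ∈ minCovers n 𝓐',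
      lam ^ (-(C'.card : ℤ)) * covWeight n lam (𝓐.filter (fun F => Disjoint F C'))
      = ∑ D ∈ minCovers n (𝓐.filter (fun F => Disjoint F C')),
          lam ^ (-(C'.card : ℤ)) * lam ^ (-(D.card : ℤ)) := by
    intro C' _
    rw [covWeight, Finset.mul_sum]
  rw [Finset.sum_congr rfl hterm, Finset.sum_sigma']
  -- LHS: sum over image of the embedding into the sigma set
  set T := (minCovers n 𝓐').sigma
      (fun C' => minCovers n (𝓐.filter (fun F => Disjoint F C'))) with hT
  have himg : ∀ (C : Finset α) (hC : C ∈ minCovers n 𝓐),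
      (⟨f C hC, g C hC⟩ : Σ _ : Finset α, Finset α) ∈ T := by
    intro C hC
    simp only [hT, Finset.mem_sigma]
    exact ⟨hf C hC, hg C hC⟩
  have hcardeq : ∀ (C) (hC : C ∈ minCovers n 𝓐),
      lam ^ (-(C.card : ℤ)) =
        lam ^ (-((f C hC).card : ℤ)) * lam ^ (-((g C hC).card : ℤ)) := by
    intro C hC
    rw [← zpow_add₀ hlne]
    congr 1
    have h1 : (g C hC).card + (f C hC).card = C.card := by
      rw [hgd C hC]
      exact Finset.card_sdiff_add_card_eq_card (hfsub C hC)
    have : ((f C hC).card : ℤ) + ((g C hC).card : ℤ) = (C.card : ℤ) := by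
      exact_mod_cast by omega
    omega
  calc covWeight n lam 𝓐
      = ∑ C ∈ (minCovers n 𝓐).attach,
          lam ^ (-((f C.1 C.2).card : ℤ)) * lam ^ (-((g C.1 C.2).card : ℤ)) := by
        rw [covWeight, ← Finset.sum_attach (minCovers n 𝓐) (fun C => lam ^ (-(C.card:ℤ)))]
        exact Finset.sum_congr rfl (fun C _ => hcardeq C.1 C.2)
    _ = ∑ p ∈ (minCovers n 𝓐).attach.image
          (fun C => (⟨f C.1 C.2, g C.1 C.2⟩ : Σ _ : Finset α, Finset α)),
          lam ^ (-(p.1.card : ℤ)) * lam ^ (-(p.2.card : ℤ)) := by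
        rw [Finset.sum_image]
        intro C₁ _ C₂ _ h
        obtain ⟨h1, h2⟩ := Sigma.ext_iff.mp h
        simp only at h1 h2
        replace h2 := eq_of_heq h2
        have e1 : C₁.1 = f C₁.1 C₁.2 ∪ g C₁.1 C₁.2 := by
          rw [hgd C₁.1 C₁.2, Finset.union_sdiff_of_subset (hfsub C₁.1 C₁.2)]
        have e2 : C₂.1 = f C₂.1 C₂.2 ∪ g C₂.1 C₂.2 := by
          rw [hgd C₂.1 C₂.2, Finset.union_sdiff_of_subset (hfsub C₂.1 C₂.2)]
        have : C₁.1 = C₂.1 := by rw [e1, e2, h1, h2]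
        exact Subtype.ext this
    _ ≤ ∑ p ∈ T, lam ^ (-(p.1.card : ℤ)) * lam ^ (-(p.2.card : ℤ)) := by
        apply Finset.sum_le_sum_of_subset_of_nonneg
        · intro p hp
          simp only [Finset.mem_image, Finset.mem_attach, true_and] at hp
          obtain ⟨C, hC⟩ := hp
          exact hC ▸ himg C.1 C.2
        · intro p _ _
          positivity
end

section
/- Let $\mathcal{F}$ be a finite family of nonempty finite sets each of size at most $n$ (with $n\ge 1$). Then $c_n(\mathcal{F})=\sum_{C\in\mathcal{C}(\mathcal{F})}n^{-|C|}\le 1$, where $\mathcal{C}(\mathcal{F})$ is the family of minimal covers of $\mathcal{F}$ of size at most $n$. -/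
open Finset

variable {α : Type*}

private lemma mem_minCovers [Fintype α] [DecidableEq α] {n : ℕ} {𝓕 : Finset (Finset α)}
    {C : Finset α} :
    C ∈ minCovers n 𝓕 ↔ C.card ≤ n ∧ IsCover C 𝓕 ∧ ∀ C' ⊆ C, IsCover C' 𝓕 → C' = C := by
  classical
  simp [minCovers]

theorem stmt2 [Fintype α] [DecidableEq α] (n : ℕ) (hn : 1 ≤ n) (𝓕 : Finset (Finset α))
    (hne : ∀ A ∈ 𝓕, A.Nonempty) (hcard : ∀ A ∈ 𝓕, A.card ≤ n) :
    covWeight n (n : ℝ) 𝓕 ≤ 1 := by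
  classical
  induction 𝓕 using Finset.strongInduction with
  | _ 𝓕 ih =>
  rcases 𝓕.eq_empty_or_nonempty with rfl | ⟨A, hA⟩
  · have h1 : minCovers n (∅ : Finset (Finset α)) = {∅} := by
      ext C
      simp only [mem_minCovers, mem_singleton]
      constructor
      · rintro ⟨-, -, hmin⟩
        exact (hmin ∅ (empty_subset _) (fun B hB => absurd hB (notMem_empty _))).symm
      · rintro rfl
        exact ⟨by simpa using Nat.zero_le n, fun B hB => absurd hB (notMem_empty _),
          fun C' h _ => subset_empty.mp h⟩
    simp [covWeight, h1]
  · have hnpos : (0:ℝ) < (n:ℝ) := by exact_mod_cast hn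
    have hn0 : (n:ℝ) ≠ 0 := ne_of_gt hnpos
    set w : Finset α → ℝ := fun C => (n:ℝ) ^ (-(C.card : ℤ)) with hw
    have hwpos : ∀ C, 0 < w C := fun C => zpow_pos hnpos _
    set M := minCovers n 𝓕 with hM
    -- Step A : covWeight ≤ ∑ x ∈ A, ∑ C ∈ M with x ∈ C, w C
    have stepA : covWeight n (n:ℝ) 𝓕 ≤
        ∑ x ∈ A, ∑ C ∈ M.filter (fun C => x ∈ C), w C := by
      have h1 : covWeight n (n:ℝ) 𝓕 = ∑ C ∈ M, w C := rfl
      rw [h1]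
      have h2 : ∀ C ∈ M, w C ≤ ∑ x ∈ A, (if x ∈ C then w C else 0) := by
        intro C hC
        have hcov : IsCover C 𝓕 := (mem_minCovers.mp hC).2.1
        obtain ⟨y, hy⟩ := hcov A hA
        rw [mem_inter] at hy
        have : ∑ x ∈ A, (if x ∈ C then w C else 0) = ((A ∩ C).card : ℝ) * w C := by
          rw [← Finset.sum_filter, Finset.sum_const, Finset.filter_mem_eq_inter]
          simp [mul_comm]
        rw [this]
        have hcard1 : (1:ℝ) ≤ ((A ∩ C).card : ℝ) := by
          have : 0 < (A ∩ C).card := card_pos.mpr ⟨y, mem_inter.mpr ⟨hy.2, hy.1⟩⟩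
          exact_mod_cast this
        nlinarith [hwpos C]
      calc ∑ C ∈ M, w C ≤ ∑ C ∈ M, ∑ x ∈ A, (if x ∈ C then w C else 0) :=
            Finset.sum_le_sum h2
        _ = ∑ x ∈ A, ∑ C ∈ M, (if x ∈ C then w C else 0) := Finset.sum_comm
        _ = ∑ x ∈ A, ∑ C ∈ M.filter (fun C => x ∈ C), w C := by
            refine Finset.sum_congr rfl fun x _ => ?_
            rw [Finset.sum_filter]
    -- Step B : for each x ∈ A, inner sum ≤ (1/n) * covWeight of link family
    have stepB : ∀ x ∈ A, ∑ C ∈ M.filter (fun C => x ∈ C), w C ≤ (n:ℝ)⁻¹ := by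
      intro x hx
      set Fx := 𝓕.filter (fun B => x ∉ B) with hFx
      have hFsub : Fx ⊆ 𝓕 := filter_subset _ _
      have hFss : Fx ⊂ 𝓕 := by
        refine hFsub.ssubset_of_ne fun h => ?_
        have : A ∈ Fx := h ▸ hA
        exact (mem_filter.mp this).2 hx
      have himg : ∀ C ∈ M.filter (fun C => x ∈ C), C.erase x ∈ minCovers n Fx := by
        intro C hC
        rw [mem_filter] at hC
        obtain ⟨hCM, hxC⟩ := hC
        obtain ⟨hCn, hCcov, hCmin⟩ := mem_minCovers.mp hCM
        refine mem_minCovers.mpr ⟨le_trans (card_le_card (erase_subset _ _)) hCn, ?_, ?_⟩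
        · intro B hB
          rw [mem_filter] at hB
          obtain ⟨y, hy⟩ := hCcov B hB.1
          rw [mem_inter] at hy
          refine ⟨y, mem_inter.mpr ⟨mem_erase.mpr ⟨?_, hy.1⟩, hy.2⟩⟩
          rintro rfl; exact hB.2 hy.2
        · intro D hD hDcov
          have hDx : x ∉ D := fun h => (mem_erase.mp (hD h)).1 rfl
          have hcov' : IsCover (insert x D) 𝓕 := by
            intro B hB
            by_cases hxB : x ∈ B
            · exact ⟨x, mem_inter.mpr ⟨mem_insert_self _ _, hxB⟩⟩
            · obtain ⟨y, hy⟩ := hDcov B (mem_filter.mpr ⟨hB, hxB⟩)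
              rw [mem_inter] at hy
              exact ⟨y, mem_inter.mpr ⟨mem_insert_of_mem hy.1, hy.2⟩⟩
          have hsub : insert x D ⊆ C := insert_subset hxC (hD.trans (erase_subset _ _))
          have hiD := hCmin (insert x D) hsub hcov'
          rw [← hiD, erase_insert hDx]
      have hinj : Set.InjOn (fun C : Finset α => C.erase x) ↑(M.filter (fun C => x ∈ C)) := by
        intro C₁ h₁ C₂ h₂ h
        have hx₁ : x ∈ C₁ := (mem_filter.mp h₁).2
        have hx₂ : x ∈ C₂ := (mem_filter.mp h₂).2
        simp only at h
        rw [← insert_erase hx₁, ← insert_erase hx₂, h]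
      have hwerase : ∀ C ∈ M.filter (fun C => x ∈ C),
          w C = (n:ℝ)⁻¹ * w (C.erase x) := by
        intro C hC
        have hxC : x ∈ C := (mem_filter.mp hC).2
        have hc : C.card = (C.erase x).card + 1 := (Finset.card_erase_add_one hxC).symm
        simp only [hw, hc]
        push_cast
        rw [neg_add, zpow_add₀ hn0, zpow_neg_one]
        ring
      calc ∑ C ∈ M.filter (fun C => x ∈ C), w C
          = ∑ C ∈ M.filter (fun C => x ∈ C), (n:ℝ)⁻¹ * w (C.erase x) :=
            Finset.sum_congr rfl hwerase
        _ = ∑ D ∈ (M.filter (fun C => x ∈ C)).image (fun C => C.erase x), (n:ℝ)⁻¹ * w D :=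
            (Finset.sum_image (f := fun D => (n:ℝ)⁻¹ * w D) fun C₁ h₁ C₂ h₂ h => hinj h₁ h₂ h).symm
        _ ≤ ∑ D ∈ minCovers n Fx, (n:ℝ)⁻¹ * w D := by
            refine Finset.sum_le_sum_of_subset_of_nonneg ?_ fun D _ _ => ?_
            · intro D hD
              obtain ⟨C, hC, rfl⟩ := Finset.mem_image.mp hD
              exact himg C hC
            · positivity
        _ = (n:ℝ)⁻¹ * covWeight n (n:ℝ) Fx := by
            rw [← Finset.mul_sum]; rfl
        _ ≤ (n:ℝ)⁻¹ * 1 := by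
            refine mul_le_mul_of_nonneg_left ?_ (by positivity)
            exact ih Fx hFss (fun B hB => hne B (hFsub hB)) (fun B hB => hcard B (hFsub hB))
        _ = (n:ℝ)⁻¹ := mul_one _
    calc covWeight n (n:ℝ) 𝓕 ≤ ∑ x ∈ A, ∑ C ∈ M.filter (fun C => x ∈ C), w C := stepA
      _ ≤ ∑ _x ∈ A, (n:ℝ)⁻¹ := Finset.sum_le_sum stepB
      _ = (A.card : ℝ) * (n:ℝ)⁻¹ := by rw [Finset.sum_const]; simp [mul_comm]
      _ ≤ (n:ℝ) * (n:ℝ)⁻¹ := by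
          refine mul_le_mul_of_nonneg_right ?_ (by positivity)
          exact_mod_cast hcard A hA
      _ = 1 := mul_inv_cancel₀ hn0
end

section
/- Let $R$ be a finite set, $\lambda\ge|R|$ a real number, $t\ge 0$ an integer, and $\mathcal{C}\subseteq 2^R$ an antichain (no member contains another) in which every set has size at least $t$. Then $\sum_{C\in\mathcal{C}}\lambda^{-|C|}\le\lambda^{-t}\binom{|R|}{t}$. -/
open Finset

variable {α : Type*}

private lemma choose_le_choose_mul_pow (n t : ℕ) :
    ∀ s, t ≤ s → n.choose s ≤ n.choose t * n ^ (s - t) := by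
  intro s hts
  induction s, hts using Nat.le_induction with
  | base => simp
  | succ s hts ih =>
    have h1 : n.choose (s + 1) ≤ n.choose s * n := by
      calc n.choose (s + 1) ≤ n.choose (s + 1) * (s + 1) :=
            Nat.le_mul_of_pos_right _ (Nat.succ_pos s)
        _ = n.choose s * (n - s) := Nat.choose_succ_right_eq n s
        _ ≤ n.choose s * n := Nat.mul_le_mul_left _ (Nat.sub_le _ _)
    calc n.choose (s + 1) ≤ n.choose s * n := h1
      _ ≤ (n.choose t * n ^ (s - t)) * n := Nat.mul_le_mul_right _ ih
      _ = n.choose t * n ^ (s + 1 - t) := by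
          rw [mul_assoc, ← pow_succ, Nat.succ_sub hts]

/-- LYM for an antichain contained in the powerset of a finset `R`. -/
private lemma lym_sum_inv_choose_le_one [DecidableEq α] (R : Finset α)
    (𝓒 : Finset (Finset α)) (hsub : ∀ C ∈ 𝓒, C ⊆ R)
    (hanti : ∀ C ∈ 𝓒, ∀ C' ∈ 𝓒, C ⊆ C' → C = C') :
    ∑ C ∈ 𝓒, (1 : ℝ) / (R.card.choose C.card) ≤ 1 := by
  classical
  set n := R.card with hn
  set f : Finset α → Finset {x // x ∈ R} := fun C => C.subtype (· ∈ R) with hf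
  have hmap : ∀ C ∈ 𝓒, (f C).map (Function.Embedding.subtype _) = C := by
    intro C hC
    rw [hf, Finset.subtype_map, Finset.filter_true_of_mem (fun x hx => hsub C hC hx)]
  have hcard : ∀ C ∈ 𝓒, (f C).card = C.card := by
    intro C hC
    rw [hf]
    simp only [Finset.card_subtype]
    rw [Finset.filter_true_of_mem (fun x hx => hsub C hC hx)]
  have hinj : ∀ C ∈ 𝓒, ∀ C' ∈ 𝓒, f C = f C' → C = C' := by
    intro C hC C' hC' h
    rw [← hmap C hC, ← hmap C' hC', h]
  set 𝓒' : Finset (Finset {x // x ∈ R}) := 𝓒.image f with h𝓒'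
  have hanti' : IsAntichain (· ⊆ ·) (𝓒' : Set (Finset {x // x ∈ R})) := by
    intro A hA B hB hne hAB
    simp only [h𝓒', coe_image, Set.mem_image, mem_coe] at hA hB
    obtain ⟨C, hC, rfl⟩ := hA
    obtain ⟨C', hC', rfl⟩ := hB
    have : C ⊆ C' := by
      rw [← hmap C hC, ← hmap C' hC']
      exact Finset.map_subset_map.2 hAB
    exact hne (congrArg f (hanti C hC C' hC' this))
  have hlym := Finset.sum_card_slice_div_choose_le_one (𝕜 := ℝ) hanti'
  have hcardR : Fintype.card {x // x ∈ R} = n := Fintype.card_coe R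
  rw [hcardR] at hlym
  -- rewrite sum over 𝓒 as sum over 𝓒'
  have hsum : ∑ C ∈ 𝓒, (1 : ℝ) / (n.choose C.card)
      = ∑ C' ∈ 𝓒', (1 : ℝ) / (n.choose C'.card) := by
    rw [h𝓒', Finset.sum_image hinj]
    exact Finset.sum_congr rfl fun C hC => by rw [hcard C hC]
  rw [hsum]
  -- rewrite sum over 𝓒' fiberwise by cardinality
  have hmaps : ∀ C' ∈ 𝓒', C'.card ∈ Finset.range (n + 1) := by
    intro C' hC'
    rw [Finset.mem_range, Nat.lt_succ_iff, ← hcardR]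
    exact Finset.card_le_univ C'
  rw [← Finset.sum_fiberwise_of_maps_to hmaps (fun C' => (1 : ℝ) / (n.choose C'.card))]
  refine le_trans (le_of_eq ?_) hlym
  refine Finset.sum_congr rfl fun r _ => ?_
  have : ∀ C' ∈ 𝓒'.filter (fun C' => C'.card = r),
      (1 : ℝ) / (n.choose C'.card) = 1 / (n.choose r) := by
    intro C' hC'
    rw [(Finset.mem_filter.1 hC').2]
  rw [Finset.sum_congr rfl this, Finset.sum_const]
  have h2 : 𝓒'.filter (fun C' => C'.card = r) = 𝓒' # r := rfl
  rw [h2, nsmul_eq_mul, mul_one_div]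

theorem stmt4 [DecidableEq α] (R : Finset α) (lam : ℝ) (hlam : (R.card : ℝ) ≤ lam)
    (t : ℕ) (𝓒 : Finset (Finset α)) (hsub : ∀ C ∈ 𝓒, C ⊆ R)
    (hanti : ∀ C ∈ 𝓒, ∀ C' ∈ 𝓒, C ⊆ C' → C = C')
    (hsize : ∀ C ∈ 𝓒, t ≤ C.card) :
    ∑ C ∈ 𝓒, lam ^ (-(C.card : ℤ)) ≤ lam ^ (-(t : ℤ)) * (R.card.choose t) := by
  classical
  set n := R.card with hn
  rcases eq_or_lt_of_le (le_trans (by positivity) hlam : (0:ℝ) ≤ lam) with hl0 | hl0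
  · -- lam = 0, hence n = 0, R = ∅, 𝓒 ⊆ {∅}, t = 0
    have hn0 : n = 0 := by
      have : (n : ℝ) ≤ 0 := hl0 ▸ hlam
      exact_mod_cast le_antisymm (by exact_mod_cast this) (Nat.zero_le n)
    have hR : R = ∅ := Finset.card_eq_zero.1 hn0
    rcases 𝓒.eq_empty_or_nonempty with rfl | ⟨C0, hC0⟩
    · rw [Finset.sum_empty]
      exact mul_nonneg (zpow_nonneg (le_of_eq hl0) _) (by positivity)
    · have hC0e : C0 = ∅ := Finset.subset_empty.1 (hR ▸ hsub C0 hC0)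
      have ht0 : t = 0 := Nat.le_zero.1 (by simpa [hC0e] using hsize C0 hC0)
      have h𝓒 : 𝓒 = {∅} := by
        apply Finset.Subset.antisymm
        · intro C hC
          simp [Finset.subset_empty.1 (hR ▸ hsub C hC)]
        · intro C hC
          simp only [Finset.mem_singleton] at hC
          subst hC
          rwa [← hC0e]
      subst ht0
      rw [h𝓒]
      simp
  · -- lam > 0
    have hkey : ∀ C ∈ 𝓒, lam ^ (-(C.card : ℤ))
        ≤ (lam ^ (-(t : ℤ)) * (n.choose t)) * (1 / (n.choose C.card)) := by
      intro C hC
      have hts : t ≤ C.card := hsize C hC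
      have hsn : C.card ≤ n := Finset.card_le_card (hsub C hC)
      have hchoosepos : (0 : ℝ) < n.choose C.card := by
        exact_mod_cast Nat.choose_pos hsn
      rw [mul_one_div, le_div_iff₀ hchoosepos]
      -- show lam^{-s} * choose n s ≤ lam^{-t} * choose n t
      have h1 : (n.choose C.card : ℝ) ≤ (n.choose t : ℝ) * (n : ℝ) ^ (C.card - t) := by
        exact_mod_cast choose_le_choose_mul_pow n t C.card hts
      have h2 : ((n : ℝ)) ^ (C.card - t) ≤ lam ^ (C.card - t) :=
        pow_le_pow_left₀ (by positivity) hlam _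
      have h3 : (n.choose C.card : ℝ) ≤ (n.choose t : ℝ) * lam ^ (C.card - t) :=
        h1.trans (mul_le_mul_of_nonneg_left h2 (Nat.cast_nonneg _))
      calc lam ^ (-(C.card : ℤ)) * (n.choose C.card : ℝ)
          ≤ lam ^ (-(C.card : ℤ)) * ((n.choose t : ℝ) * lam ^ (C.card - t)) := by
            have := zpow_pos hl0 (-(C.card : ℤ))
            nlinarith
        _ = lam ^ (-(t : ℤ)) * (n.choose t : ℝ) := by
            rw [← zpow_natCast lam (C.card - t)]
            rw [mul_comm ((n.choose t : ℝ)) _, ← mul_assoc, ← zpow_add₀ (ne_of_gt hl0)]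
            congr 2
            push_cast [Nat.cast_sub hts]
            ring
    calc ∑ C ∈ 𝓒, lam ^ (-(C.card : ℤ))
        ≤ ∑ C ∈ 𝓒, (lam ^ (-(t : ℤ)) * (n.choose t)) * (1 / (n.choose C.card)) :=
          Finset.sum_le_sum hkey
      _ = (lam ^ (-(t : ℤ)) * (n.choose t)) * ∑ C ∈ 𝓒, (1 : ℝ) / (n.choose C.card) := by
          rw [Finset.mul_sum]
      _ ≤ (lam ^ (-(t : ℤ)) * (n.choose t)) * 1 := by
          refine mul_le_mul_of_nonneg_left (lym_sum_inv_choose_le_one R 𝓒 hsub hanti) ?_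
          positivity
      _ = lam ^ (-(t : ℤ)) * (n.choose t) := mul_one _
end

section
/- Let $\mathcal{A}$ be a $\tau$-critical $n$-uniform family and $\mathcal{K}\subseteq\mathcal{A}$ a subfamily such that $|\bigcap_{F\in\mathcal{K}}F|\ge n-k$ for some integer $k\ge 0$. Then $|\mathcal{K}|\le\binom{\tau(\mathcal{A})+k}{k}$. -/
open Finset

variable {α : Type*}

private lemma choose_identity (a b : ℕ) (hb : 1 ≤ b) :
    (a + b) * ((a + (b - 1)).choose a) = b * ((a + b).choose a) := by
  obtain ⟨b', rfl⟩ : ∃ b', b = b' + 1 := ⟨b - 1, by omega⟩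
  have h1 := Nat.add_one_mul_choose_eq (a + b') b'
  have h2 : (a + b').choose a = (a + b').choose b' := Nat.choose_symm_add
  have h3 : (a + (b' + 1)).choose a = (a + (b' + 1)).choose (b' + 1) := Nat.choose_symm_add
  have h4 : b' + 1 - 1 = b' := rfl
  rw [h4, h2, h3]
  have : a + (b' + 1) = (a + b') + 1 := by omega
  rw [this]
  calc ((a + b') + 1) * (a + b').choose b' = (a + b' + 1).choose (b' + 1) * (b' + 1) := h1
    _ = (b' + 1) * (a + b' + 1).choose (b' + 1) := by ring

private lemma bollobas_weighted {ι β : Type*} [DecidableEq ι] [DecidableEq β] :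
    ∀ (N : ℕ) (X : Finset β) (I : Finset ι) (A B : ι → Finset β),
      X.card = N →
      (∀ i ∈ I, A i ⊆ X) → (∀ i ∈ I, B i ⊆ X) →
      (∀ i ∈ I, Disjoint (A i) (B i)) →
      (∀ i ∈ I, ∀ j ∈ I, i ≠ j → ((A i) ∩ (B j)).Nonempty) →
      ∑ i ∈ I, ((((A i).card + (B i).card).choose (A i).card : ℕ) : ℚ)⁻¹ ≤ 1 := by
  intro N
  induction N using Nat.strong_induction_on with
  | _ N ih =>
  intro X I A B hXcard hAX hBX hdisj hcross
  by_cases hm : I.card ≤ 1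
  · rcases I.eq_empty_or_nonempty with rfl | ⟨i, hi⟩
    · simp
    · have : I = {i} := by
        apply Finset.eq_singleton_iff_unique_mem.mpr
        exact ⟨hi, fun j hj => Finset.card_le_one.mp hm j hj i hi⟩
      subst this
      rw [Finset.sum_singleton]
      rw [inv_le_one_iff₀]
      right
      exact_mod_cast Nat.one_le_iff_ne_zero.mpr (Nat.choose_pos (Nat.le_add_right _ _)).ne'
  · push_neg at hm
    have hBne : ∀ i ∈ I, (B i).Nonempty := by
      intro i hi
      obtain ⟨j, hj, hne⟩ := Finset.exists_mem_ne hm i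
      exact ((hcross j hj i hi hne).mono (Finset.inter_subset_right))
    have hN : 1 ≤ N := by
      obtain ⟨i, hi⟩ := Finset.card_pos.mp (by omega : 0 < I.card)
      obtain ⟨y, hy⟩ := hBne i hi
      have := Finset.card_pos.mpr ⟨y, hBX i hi hy⟩
      omega
    -- per-x application of the induction hypothesis
    have key : ∀ x ∈ X, ∑ i ∈ I.filter (fun i => x ∉ A i),
        ((((A i).card + ((B i).erase x).card).choose (A i).card : ℕ) : ℚ)⁻¹ ≤ 1 := by
      intro x hx
      apply ih (N - 1) (by omega) (X.erase x) _ A (fun i => (B i).erase x)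
      · rw [Finset.card_erase_of_mem hx, hXcard]
      · intro i hi a ha
        rw [Finset.mem_filter] at hi
        exact Finset.mem_erase.mpr ⟨fun h => hi.2 (h ▸ ha), hAX i hi.1 ha⟩
      · intro i hi
        exact Finset.erase_subset_erase x (hBX i (Finset.mem_filter.mp hi).1)
      · intro i hi
        exact (hdisj i (Finset.mem_filter.mp hi).1).mono_right (Finset.erase_subset _ _)
      · intro i hi j hj hne
        obtain ⟨y, hy⟩ := hcross i (Finset.mem_filter.mp hi).1 j (Finset.mem_filter.mp hj).1 hne
        rw [Finset.mem_inter] at hy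
        exact ⟨y, Finset.mem_inter.mpr ⟨hy.1,
          Finset.mem_erase.mpr ⟨fun h => (Finset.mem_filter.mp hi).2 (h ▸ hy.1), hy.2⟩⟩⟩
    have total : ∑ x ∈ X, ∑ i ∈ I.filter (fun i => x ∉ A i),
        ((((A i).card + ((B i).erase x).card).choose (A i).card : ℕ) : ℚ)⁻¹ ≤ (N : ℚ) := by
      calc _ ≤ ∑ _x ∈ X, (1 : ℚ) := Finset.sum_le_sum key
        _ = (N : ℚ) := by rw [Finset.sum_const, hXcard]; simp
    -- swap the order of summation
    have swap : ∑ x ∈ X, ∑ i ∈ I.filter (fun i => x ∉ A i),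
        ((((A i).card + ((B i).erase x).card).choose (A i).card : ℕ) : ℚ)⁻¹
        = ∑ i ∈ I, ∑ x ∈ X \ A i,
        ((((A i).card + ((B i).erase x).card).choose (A i).card : ℕ) : ℚ)⁻¹ := by
      rw [Finset.sum_comm']
      intro x y
      simp only [Finset.mem_filter, Finset.mem_sdiff]
      tauto
    have per_i : ∀ i ∈ I, ∑ x ∈ X \ A i,
        ((((A i).card + ((B i).erase x).card).choose (A i).card : ℕ) : ℚ)⁻¹
        = (N : ℚ) * ((((A i).card + (B i).card).choose (A i).card : ℕ) : ℚ)⁻¹ := by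
      intro i hi
      have hb1 : 1 ≤ (B i).card := Finset.card_pos.mpr (hBne i hi)
      have hsub : A i ∪ B i ⊆ X := Finset.union_subset (hAX i hi) (hBX i hi)
      have hcardu : (A i ∪ B i).card = (A i).card + (B i).card :=
        Finset.card_union_of_disjoint (hdisj i hi)
      have habN : (A i).card + (B i).card ≤ N := by
        have := Finset.card_le_card hsub
        rw [hcardu, hXcard] at this; exact this
      have hd := Finset.disjoint_right.mp (hdisj i hi)
      have hsplit : X \ A i = (B i) ∪ (X \ (A i ∪ B i)) := by
        ext y
        have h1 : y ∈ B i → y ∈ X := fun h => hBX i hi h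
        have h2 : y ∈ B i → y ∉ A i := fun h => hd h
        simp only [Finset.mem_sdiff, Finset.mem_union]
        tauto
      have hdisj2 : Disjoint (B i) (X \ (A i ∪ B i)) := by
        rw [Finset.disjoint_left]
        intro y hyB hy
        exact (Finset.mem_sdiff.mp hy).2 (Finset.mem_union_right _ hyB)
      rw [hsplit, Finset.sum_union hdisj2]
      have sum1 : ∑ x ∈ B i, ((((A i).card + ((B i).erase x).card).choose (A i).card : ℕ) : ℚ)⁻¹
          = ((B i).card : ℚ) * ((((A i).card + ((B i).card - 1)).choose (A i).card : ℕ) : ℚ)⁻¹ := by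
        rw [Finset.sum_congr rfl (fun x hx => by rw [Finset.card_erase_of_mem hx])]
        rw [Finset.sum_const, nsmul_eq_mul]
      have sum2 : ∑ x ∈ X \ (A i ∪ B i),
          ((((A i).card + ((B i).erase x).card).choose (A i).card : ℕ) : ℚ)⁻¹
          = ((N - ((A i).card + (B i).card) : ℕ) : ℚ)
            * ((((A i).card + (B i).card).choose (A i).card : ℕ) : ℚ)⁻¹ := by
        rw [Finset.sum_congr rfl (fun x hx => by
          rw [Finset.erase_eq_of_notMem (fun hc =>
            (Finset.mem_sdiff.mp hx).2 (Finset.mem_union_right _ hc))])]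
        rw [Finset.sum_const, nsmul_eq_mul, Finset.card_sdiff_of_subset hsub, hcardu, hXcard]
      rw [sum1, sum2]
      have hpos1 : (0:ℚ) < ((((A i).card + ((B i).card - 1)).choose (A i).card : ℕ) : ℚ) := by
        exact_mod_cast Nat.choose_pos (Nat.le_add_right _ _)
      have hpos2 : (0:ℚ) < ((((A i).card + (B i).card).choose (A i).card : ℕ) : ℚ) := by
        exact_mod_cast Nat.choose_pos (Nat.le_add_right _ _)
      have hid : (((A i).card + (B i).card) * (((A i).card + ((B i).card - 1)).choose (A i).card)
          : ℕ) = ((B i).card * (((A i).card + (B i).card).choose (A i).card) : ℕ) :=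
        choose_identity _ _ hb1
      have hid' : (((A i).card : ℚ) + ((B i).card : ℚ))
            * ((((A i).card + ((B i).card - 1)).choose (A i).card : ℕ) : ℚ)
          = ((B i).card : ℚ) * ((((A i).card + (B i).card).choose (A i).card : ℕ) : ℚ) := by
        exact_mod_cast hid
      have hcast : ((N - ((A i).card + (B i).card) : ℕ) : ℚ)
          = (N : ℚ) - (((A i).card : ℚ) + ((B i).card : ℚ)) := by
        push_cast [Nat.cast_sub habN]; ring
      rw [hcast]
      field_simp
      nlinarith [hid', hpos1, hpos2]
    have main : (N : ℚ) * ∑ i ∈ I, ((((A i).card + (B i).card).choose (A i).card : ℕ) : ℚ)⁻¹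
        ≤ (N : ℚ) * 1 := by
      rw [Finset.mul_sum, mul_one]
      calc ∑ i ∈ I, (N : ℚ) * ((((A i).card + (B i).card).choose (A i).card : ℕ) : ℚ)⁻¹
          = ∑ i ∈ I, ∑ x ∈ X \ A i,
            ((((A i).card + ((B i).erase x).card).choose (A i).card : ℕ) : ℚ)⁻¹ :=
            Finset.sum_congr rfl (fun i hi => (per_i i hi).symm)
        _ = ∑ x ∈ X, ∑ i ∈ I.filter (fun i => x ∉ A i),
            ((((A i).card + ((B i).erase x).card).choose (A i).card : ℕ) : ℚ)⁻¹ := swap.symm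
        _ ≤ (N : ℚ) := total
    have hNpos : (0:ℚ) < N := by exact_mod_cast hN
    exact le_of_mul_le_mul_left main hNpos

private lemma bollobas_pairs {ι β : Type*} [DecidableEq ι] [DecidableEq β]
    (I : Finset ι) (A B : ι → Finset β) (a b : ℕ)
    (hA : ∀ i ∈ I, (A i).card ≤ a) (hB : ∀ i ∈ I, (B i).card ≤ b)
    (hd : ∀ i ∈ I, Disjoint (A i) (B i))
    (hcross : ∀ i ∈ I, ∀ j ∈ I, i ≠ j → ((A i) ∩ (B j)).Nonempty) :
    I.card ≤ (a + b).choose a := by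
  classical
  set X := I.biUnion (fun i => A i ∪ B i) with hX
  have hAX : ∀ i ∈ I, A i ⊆ X := fun i hi y hy =>
    Finset.mem_biUnion.mpr ⟨i, hi, Finset.mem_union_left _ hy⟩
  have hBX : ∀ i ∈ I, B i ⊆ X := fun i hi y hy =>
    Finset.mem_biUnion.mpr ⟨i, hi, Finset.mem_union_right _ hy⟩
  have hw := bollobas_weighted X.card X I A B rfl hAX hBX hd hcross
  have hmono : ∀ i ∈ I, (((a + b).choose a : ℕ) : ℚ)⁻¹
      ≤ ((((A i).card + (B i).card).choose (A i).card : ℕ) : ℚ)⁻¹ := by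
    intro i hi
    have h1 : ((A i).card + (B i).card).choose (A i).card ≤ (a + b).choose a := by
      calc ((A i).card + (B i).card).choose (A i).card
          = ((A i).card + (B i).card).choose (B i).card := Nat.choose_symm_add
        _ ≤ (a + (B i).card).choose (B i).card :=
            Nat.choose_le_choose _ (by have := hA i hi; omega)
        _ = (a + (B i).card).choose a := Nat.choose_symm_add.symm
        _ ≤ (a + b).choose a := Nat.choose_le_choose _ (by have := hB i hi; omega)
    have hpos : 0 < ((A i).card + (B i).card).choose (A i).card :=
      Nat.choose_pos (Nat.le_add_right _ _)
    apply inv_anti₀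
    · exact_mod_cast hpos
    · exact_mod_cast h1
  have hCpos : (0:ℚ) < (((a + b).choose a : ℕ) : ℚ) := by
    exact_mod_cast Nat.choose_pos (Nat.le_add_right _ _)
  have hfin : (I.card : ℚ) * (((a + b).choose a : ℕ) : ℚ)⁻¹ ≤ 1 := by
    calc (I.card : ℚ) * (((a + b).choose a : ℕ) : ℚ)⁻¹
        = ∑ _i ∈ I, (((a + b).choose a : ℕ) : ℚ)⁻¹ := by
          rw [Finset.sum_const, nsmul_eq_mul]
      _ ≤ ∑ i ∈ I, ((((A i).card + (B i).card).choose (A i).card : ℕ) : ℚ)⁻¹ :=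
          Finset.sum_le_sum hmono
      _ ≤ 1 := hw
  have hinv : (((a + b).choose a : ℕ) : ℚ)⁻¹ * (((a + b).choose a : ℕ) : ℚ) = 1 :=
    inv_mul_cancel₀ hCpos.ne'
  have : (I.card : ℚ) ≤ (((a + b).choose a : ℕ) : ℚ) := by nlinarith [hfin, hCpos, hinv]
  exact_mod_cast this

theorem stmt6 [Fintype α] [DecidableEq α] (n k : ℕ) (𝓐 : Finset (Finset α))
    (hunif : ∀ A ∈ 𝓐, A.card = n)
    (hcrit : ∀ 𝓐' ⊆ 𝓐, 𝓐' ≠ 𝓐 → covNum 𝓐' < covNum 𝓐)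
    (𝓚 : Finset (Finset α)) (hsub : 𝓚 ⊆ 𝓐)
    (hker : n - k ≤ (univ.filter (fun x => ∀ F ∈ 𝓚, x ∈ F)).card) :
    𝓚.card ≤ (covNum 𝓐 + k).choose k := by
  classical
  rcases 𝓚.eq_empty_or_nonempty with rfl | hKne
  · simp
  obtain ⟨F0, hF0⟩ := hKne
  have h𝓐ne : 𝓐.Nonempty := ⟨F0, hsub hF0⟩
  have hτ1 : 1 ≤ covNum 𝓐 := by
    have h0 : covNum (∅ : Finset (Finset α)) = 0 := by
      have h : covNum (∅ : Finset (Finset α)) ≤ 0 :=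
        Nat.sInf_le ⟨∅, Finset.card_empty, fun A hA => absurd hA (Finset.notMem_empty A)⟩
      omega
    have := hcrit ∅ (Finset.empty_subset _) (fun h => h𝓐ne.ne_empty h.symm)
    omega
  have hne_empty : (∅ : Finset α) ∉ 𝓐 := by
    intro h
    have hzero : covNum 𝓐 = 0 := by
      have hset : {k | ∃ C : Finset α, C.card = k ∧ IsCover C 𝓐} = ∅ := by
        ext m
        simp only [Set.mem_setOf_eq, Set.mem_empty_iff_false, iff_false]
        rintro ⟨C, hC, hcov⟩
        obtain ⟨x, hx⟩ := hcov ∅ h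
        simp at hx
      rw [covNum, hset, Nat.sInf_empty]
    omega
  have hcov_le : ∀ C : Finset α, IsCover C 𝓐 → covNum 𝓐 ≤ C.card :=
    fun C hC => Nat.sInf_le ⟨C, rfl, hC⟩
  have hexists : ∀ F ∈ 𝓚, ∃ S : Finset α,
      S.card < covNum 𝓐 ∧ IsCover S (𝓐.erase F) ∧ Disjoint S F := by
    intro F hF
    have hFA := hsub hF
    have hlt : covNum (𝓐.erase F) < covNum 𝓐 :=
      hcrit _ (Finset.erase_subset _ _) (Finset.erase_ne_self.mpr hFA)
    have hne : {k | ∃ C : Finset α, C.card = k ∧ IsCover C (𝓐.erase F)}.Nonempty := by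
      refine ⟨(univ : Finset α).card, univ, rfl, ?_⟩
      intro A hA
      have hAA : A ∈ 𝓐 := Finset.mem_of_mem_erase hA
      have hAne : A.Nonempty := Finset.nonempty_iff_ne_empty.mpr (fun h => hne_empty (h ▸ hAA))
      rwa [Finset.univ_inter]
    obtain ⟨Sf, hScard, hScov⟩ := Nat.sInf_mem hne
    have hScard' : Sf.card = covNum (𝓐.erase F) := hScard
    have hdisjSF : Disjoint Sf F := by
      by_contra hnd
      rw [Finset.not_disjoint_iff] at hnd
      obtain ⟨x, hxS, hxF⟩ := hnd
      have hcovA : IsCover Sf 𝓐 := by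
        intro A hA
        by_cases hAF : A = F
        · exact ⟨x, Finset.mem_inter.mpr ⟨hxS, hAF ▸ hxF⟩⟩
        · exact hScov A (Finset.mem_erase.mpr ⟨hAF, hA⟩)
      have := hcov_le Sf hcovA
      omega
    exact ⟨Sf, by omega, hScov, hdisjSF⟩
  choose! S hS1 hS2 hS3 using hexists
  set K := univ.filter (fun x => ∀ F ∈ 𝓚, x ∈ F) with hKdef
  have hKsub : ∀ F ∈ 𝓚, K ⊆ F := fun F hF x hx => (Finset.mem_filter.mp hx).2 F hF
  have hA : ∀ F ∈ 𝓚, (F \ K).card ≤ k := by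
    intro F hF
    rw [Finset.card_sdiff_of_subset (hKsub F hF), hunif F (hsub hF)]
    omega
  have hB : ∀ F ∈ 𝓚, (S F).card ≤ covNum 𝓐 - 1 := by
    intro F hF
    have := hS1 F hF
    omega
  have hd : ∀ F ∈ 𝓚, Disjoint (F \ K) (S F) :=
    fun F hF => ((hS3 F hF).symm.mono_left Finset.sdiff_subset)
  have hcross : ∀ F ∈ 𝓚, ∀ G ∈ 𝓚, F ≠ G → ((F \ K) ∩ S G).Nonempty := by
    intro F hF G hG hne
    have hFeG : F ∈ 𝓐.erase G := Finset.mem_erase.mpr ⟨hne, hsub hF⟩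
    obtain ⟨x, hx⟩ := hS2 G hG F hFeG
    rw [Finset.mem_inter] at hx
    have hxK : x ∉ K := fun hxK =>
      (Finset.disjoint_left.mp (hS3 G hG)) hx.1 (hKsub G hG hxK)
    exact ⟨x, Finset.mem_inter.mpr ⟨Finset.mem_sdiff.mpr ⟨hx.2, hxK⟩, hx.1⟩⟩
  have happ := bollobas_pairs 𝓚 (fun F => F \ K) S k (covNum 𝓐 - 1) hA hB hd hcross
  calc 𝓚.card ≤ (k + (covNum 𝓐 - 1)).choose k := happ
    _ ≤ (covNum 𝓐 + k).choose k := Nat.choose_le_choose _ (by omega)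
end

section
/- Let $X$ be a finite set, $f:X\to\mathbb{R}_{\ge 0}$ a nonzero function, and $\mathcal{F}$ a nonempty finite family of subsets of $X$ with covering number $\tau(\mathcal{F})\ge 1$. Then $\sum_{F\in\mathcal{F}}\left(1-\frac{f(F)}{f(X)}\right)^{\tau(\mathcal{F})-1}\ge 1$, where $f(S)=\sum_{x\in S}f(x)$. -/
open Finset

variable {α : Type*}

theorem stmt7 [Fintype α] [DecidableEq α] (f : α → ℝ) (hf0 : ∀ x, 0 ≤ f x) (hfne : f ≠ 0)
    (𝓕 : Finset (Finset α)) (hne : 𝓕.Nonempty) (htau : 1 ≤ covNum 𝓕) :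
    1 ≤ ∑ F ∈ 𝓕, (1 - (∑ x ∈ F, f x) / (∑ x, f x)) ^ (covNum 𝓕 - 1) := by
  classical
  set t := covNum 𝓕 - 1 with ht
  set S := ∑ x, f x with hSdef
  have hS : 0 < S := by
    obtain ⟨x, hx⟩ : ∃ x, f x ≠ 0 := by
      by_contra h
      push_neg at h
      exact hfne (funext h)
    exact Finset.sum_pos' (fun y _ => hf0 y) ⟨x, mem_univ x, (hf0 x).lt_of_ne (Ne.symm hx)⟩
  set p : α → ℝ := fun x => f x / S with hp
  have hpnn : ∀ x, 0 ≤ p x := fun x => div_nonneg (hf0 x) hS.le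
  have hpsum : ∑ x, p x = 1 := by
    rw [hp, ← Finset.sum_div, ← hSdef, div_self hS.ne']
  have hterm : ∀ F : Finset α, 1 - (∑ x ∈ F, f x) / S
      = ∑ x, (if x ∈ F then 0 else p x) := by
    intro F
    have h1 : ∑ x, (if x ∈ F then 0 else p x)
        = ∑ x, (p x - if x ∈ F then p x else 0) := by
      apply Finset.sum_congr rfl
      intro x _
      split <;> ring
    rw [h1, Finset.sum_sub_distrib, hpsum, Finset.sum_ite_mem, Finset.univ_inter, hp]
    simp [Finset.sum_div]
  have key : ∀ w : Fin t → α,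
      ∏ i, p (w i) ≤ ∑ F ∈ 𝓕, ∏ i, (if w i ∈ F then 0 else p (w i)) := by
    intro w
    obtain ⟨F, hF𝓕, hFmiss⟩ : ∃ F ∈ 𝓕, ∀ i, w i ∉ F := by
      by_contra h
      push_neg at h
      have hcover : IsCover (Finset.image w univ) 𝓕 := by
        intro A hA
        obtain ⟨i, hi⟩ := h A hA
        exact ⟨w i, Finset.mem_inter.2 ⟨Finset.mem_image_of_mem w (mem_univ i), hi⟩⟩
      have h1 : covNum 𝓕 ≤ (Finset.image w univ).card :=
        Nat.sInf_le ⟨Finset.image w univ, rfl, hcover⟩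
      have h2 : (Finset.image w univ).card ≤ t := by
        calc (Finset.image w univ).card ≤ (univ : Finset (Fin t)).card :=
          Finset.card_image_le
        _ = t := by simp
      omega
    have heq : ∏ i, (if w i ∈ F then 0 else p (w i)) = ∏ i, p (w i) := by
      apply Finset.prod_congr rfl
      intro i _
      simp [hFmiss i]
    calc ∏ i, p (w i) = ∏ i, (if w i ∈ F then 0 else p (w i)) := heq.symm
      _ ≤ ∑ F ∈ 𝓕, ∏ i, (if w i ∈ F then 0 else p (w i)) := by
        apply Finset.single_le_sum (f := fun F => ∏ i, (if w i ∈ F then 0 else p (w i)))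
          _ hF𝓕
        intro G _
        apply Finset.prod_nonneg
        intro i _
        split
        · exact le_rfl
        · exact hpnn _
  calc (1 : ℝ) = (∑ x, p x) ^ t := by rw [hpsum, one_pow]
    _ = ∑ w : Fin t → α, ∏ i, p (w i) := Fintype.sum_pow p t
    _ ≤ ∑ w : Fin t → α, ∑ F ∈ 𝓕, ∏ i, (if w i ∈ F then 0 else p (w i)) :=
        Finset.sum_le_sum fun w _ => key w
    _ = ∑ F ∈ 𝓕, ∑ w : Fin t → α, ∏ i, (if w i ∈ F then 0 else p (w i)) := by
        rw [Finset.sum_comm]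
    _ = ∑ F ∈ 𝓕, (1 - (∑ x ∈ F, f x) / S) ^ t := by
        apply Finset.sum_congr rfl
        intro F _
        rw [hterm F, Fintype.sum_pow (fun x => if x ∈ F then 0 else p x) t]
end

section
/- Let $X$ be a finite set, $f:X\to\mathbb{R}_{\ge 0}$ nonzero, and $\mathcal{F}$ a nonempty family of subsets of $X$ with $\tau(\mathcal{F})\ge 2$. Then there exists $F\in\mathcal{F}$ with $f(F)\le f(X)\left(1-|\mathcal{F}|^{-1/(\tau(\mathcal{F})-1)}\right)$. -/
open Finset

variable {α : Type*}

lemma key [Fintype α] [DecidableEq α] (w : α → ℝ) (hw : ∀ x, 0 ≤ w x)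
    (hsum : ∑ x, w x = 1) :
    ∀ (t : ℕ) (𝓖 : Finset (Finset α)),
      (∑ F ∈ 𝓖, (1 - ∑ x ∈ F, w x) ^ t) < 1 →
      ∃ C : Finset α, C.card ≤ t ∧ IsCover C 𝓖 := by
  intro t
  induction t with
  | zero =>
    intro 𝓖 h
    simp only [pow_zero, Finset.sum_const, nsmul_eq_mul, mul_one] at h
    have h𝓖 : 𝓖 = ∅ := by
      by_contra hne
      have : 1 ≤ (𝓖.card : ℝ) := by
        exact_mod_cast Nat.one_le_iff_ne_zero.mpr
          (fun hc => hne (Finset.card_eq_zero.mp hc))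
      linarith
    exact ⟨∅, le_refl 0, by simp [h𝓖, IsCover]⟩
  | succ t ih =>
    intro 𝓖 h
    set v : α → ℝ := fun x => ∑ F ∈ 𝓖.filter (fun F => x ∉ F), (1 - ∑ y ∈ F, w y) ^ t with hv
    have hkey : ∑ x, w x * v x = ∑ F ∈ 𝓖, (1 - ∑ x ∈ F, w x) ^ (t + 1) := by
      have h1 : ∀ x, w x * v x = ∑ F ∈ 𝓖, (if x ∉ F then w x * (1 - ∑ y ∈ F, w y) ^ t else 0) := by
        intro x
        rw [hv]
        rw [Finset.mul_sum, ← Finset.sum_filter]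
      simp_rw [h1]
      rw [Finset.sum_comm]
      refine Finset.sum_congr rfl (fun F _ => ?_)
      have h2 : ∑ x, (if x ∉ F then w x * (1 - ∑ y ∈ F, w y) ^ t else 0)
          = (∑ x ∈ univ.filter (fun x => x ∉ F), w x) * (1 - ∑ y ∈ F, w y) ^ t := by
        rw [Finset.sum_filter, Finset.sum_mul]
        refine Finset.sum_congr rfl (fun x _ => ?_)
        split <;> simp
      rw [h2]
      have h3 : ∑ x ∈ univ.filter (fun x => x ∉ F), w x = 1 - ∑ y ∈ F, w y := by
        have := Finset.sum_filter_add_sum_filter_not univ (fun x => x ∈ F) w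
        have h4 : ∑ x ∈ univ.filter (fun x => x ∈ F), w x = ∑ y ∈ F, w y := by
          refine Finset.sum_congr ?_ (fun _ _ => rfl)
          ext y; simp
        rw [h4, hsum] at this
        linarith
      rw [h3]; ring
    have hx : ∃ x, w x * v x < w x * 1 := by
      by_contra hcon
      push_neg at hcon
      have : (1:ℝ) ≤ ∑ x, w x * v x := by
        rw [← hsum]
        calc ∑ x, w x = ∑ x, w x * 1 := by simp
          _ ≤ ∑ x, w x * v x := Finset.sum_le_sum (fun x _ => hcon x)
      rw [hkey] at this
      linarith
    obtain ⟨x, hxlt⟩ := hx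
    have hwx : 0 < w x := by
      rcases lt_or_eq_of_le (hw x) with h' | h'
      · exact h'
      · exfalso; rw [← h'] at hxlt; simp at hxlt
    have hvx : v x < 1 := lt_of_mul_lt_mul_left hxlt (le_of_lt hwx)
    obtain ⟨C', hC'card, hC'cov⟩ := ih (𝓖.filter (fun F => x ∉ F)) hvx
    refine ⟨insert x C', le_trans (Finset.card_insert_le _ _) (by omega), ?_⟩
    intro A hA
    by_cases hxA : x ∈ A
    · exact ⟨x, Finset.mem_inter.mpr ⟨Finset.mem_insert_self _ _, hxA⟩⟩
    · obtain ⟨y, hy⟩ := hC'cov A (Finset.mem_filter.mpr ⟨hA, hxA⟩)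
      rw [Finset.mem_inter] at hy
      exact ⟨y, Finset.mem_inter.mpr ⟨Finset.mem_insert_of_mem hy.1, hy.2⟩⟩

theorem stmt8 [Fintype α] [DecidableEq α] (f : α → ℝ) (hf0 : ∀ x, 0 ≤ f x) (hfne : f ≠ 0)
    (𝓕 : Finset (Finset α)) (hne : 𝓕.Nonempty) (htau : 2 ≤ covNum 𝓕) :
    ∃ F ∈ 𝓕, ∑ x ∈ F, f x ≤
      (∑ x, f x) * (1 - (𝓕.card : ℝ) ^ (-(1 : ℝ) / ((covNum 𝓕 : ℝ) - 1))) := by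
  classical
  set S := ∑ x, f x with hS
  have hSpos : 0 < S := by
    obtain ⟨x, hx⟩ : ∃ x, f x ≠ 0 := by
      by_contra hc
      push_neg at hc
      exact hfne (funext hc)
    have hx' : 0 < f x := lt_of_le_of_ne (hf0 x) (Ne.symm hx)
    exact lt_of_lt_of_le hx' (Finset.single_le_sum (fun y _ => hf0 y) (Finset.mem_univ x))
  set w : α → ℝ := fun x => f x / S with hw
  have hwnn : ∀ x, 0 ≤ w x := fun x => div_nonneg (hf0 x) hSpos.le
  have hwsum : ∑ x, w x = 1 := by
    rw [hw]
    simp only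
    rw [← Finset.sum_div, ← hS, div_self hSpos.ne']
  set t := covNum 𝓕 - 1 with ht
  have htcast : (t : ℝ) = (covNum 𝓕 : ℝ) - 1 := by
    rw [ht, Nat.cast_sub (by omega)]
    simp
  have htpos : 0 < t := by omega
  have hm1 : 1 ≤ (𝓕.card : ℝ) := by
    exact_mod_cast Nat.one_le_iff_ne_zero.mpr (Finset.card_ne_zero_of_mem hne.choose_spec)
  set c : ℝ := (𝓕.card : ℝ) ^ (-(1 : ℝ) / ((covNum 𝓕 : ℝ) - 1)) with hc
  have hcpos : 0 < c := Real.rpow_pos_of_pos (by linarith) _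
  have hct : c ^ t = ((𝓕.card : ℝ))⁻¹ := by
    rw [hc, ← Real.rpow_natCast (((𝓕.card : ℝ)) ^ (-(1:ℝ) / ((covNum 𝓕 : ℝ) - 1))) t,
      ← Real.rpow_mul (by linarith)]
    have hne1 : ((covNum 𝓕 : ℝ) - 1) ≠ 0 := by
      have : (2:ℝ) ≤ (covNum 𝓕 : ℝ) := by exact_mod_cast htau
      linarith
    have : -(1:ℝ) / ((covNum 𝓕 : ℝ) - 1) * (t : ℝ) = -1 := by
      rw [htcast, div_mul_cancel₀ _ hne1]
    rw [this, Real.rpow_neg_one]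
  by_contra hcon
  push_neg at hcon
  have hterm : ∀ F ∈ 𝓕, (1 - ∑ x ∈ F, w x) ^ t < c ^ t := by
    intro F hF
    have h1 : S * (1 - c) < ∑ x ∈ F, f x := hcon F hF
    have h2 : ∑ x ∈ F, w x = (∑ x ∈ F, f x) / S := by
      rw [hw]; simp only; rw [← Finset.sum_div]
    have h3 : 1 - ∑ x ∈ F, w x < c := by
      rw [h2, sub_lt_iff_lt_add, ← sub_lt_iff_lt_add', lt_div_iff₀ hSpos]
      nlinarith
    have h4 : 0 ≤ 1 - ∑ x ∈ F, w x := by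
      have : ∑ x ∈ F, f x ≤ S :=
        Finset.sum_le_sum_of_subset_of_nonneg (Finset.subset_univ F) (fun x _ _ => hf0 x)
      rw [h2]
      have : (∑ x ∈ F, f x) / S ≤ 1 := by
        rw [div_le_one hSpos]; exact this
      linarith
    exact pow_lt_pow_left₀ h3 h4 (by omega)
  have hsumlt : ∑ F ∈ 𝓕, (1 - ∑ x ∈ F, w x) ^ t < 1 := by
    calc ∑ F ∈ 𝓕, (1 - ∑ x ∈ F, w x) ^ t < ∑ _F ∈ 𝓕, c ^ t :=
          Finset.sum_lt_sum_of_nonempty hne hterm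
      _ = 𝓕.card * ((𝓕.card : ℝ))⁻¹ := by rw [Finset.sum_const, hct, nsmul_eq_mul]
      _ = 1 := mul_inv_cancel₀ (by linarith)
  obtain ⟨C, hCcard, hCcov⟩ := key w hwnn hwsum t 𝓕 hsumlt
  have : covNum 𝓕 ≤ C.card := Nat.sInf_le ⟨C, rfl, hCcov⟩
  omega
end

section
/- Let $X$ be a finite set, let $f_1,\dots,f_l:X\to\mathbb{R}_{\ge 0}$ be nonzero functions, and let $\mathcal{F}$ be a nonempty family of subsets of $X$ with $\tau(\mathcal{F})\ge 2$. Then there exists $F\in\mathcal{F}$ such that for every $i=1,\dots,l$, $f_i(F)\le f_i(X)\,l\,(1-|\mathcal{F}|^{-1/(\tau(\mathcal{F})-1)})$. -/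
open Finset

variable {α : Type*}

lemma tuple_sum [Fintype α] (t : ℕ) (h : α → ℝ) :
    ∑ v : Fin t → α, ∏ j, h (v j) = (∑ x, h x) ^ t := by
  rw [← Fintype.piFinset_univ, ← Finset.prod_univ_sum]
  simp

lemma key_s9 [Fintype α] [DecidableEq α] (g : α → ℝ) (hg0 : ∀ x, 0 ≤ g x)
    (hg1 : ∑ x, g x = 1) (𝓕 : Finset (Finset α)) (hne : 𝓕.Nonempty)
    (htau : 2 ≤ covNum 𝓕) :
    ∃ F ∈ 𝓕, ∑ x ∈ F, g x ≤ 1 - (𝓕.card : ℝ) ^ (-(1 : ℝ) / ((covNum 𝓕 : ℝ) - 1)) := by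
  classical
  by_contra hcon
  push_neg at hcon
  set τ := covNum 𝓕 with hτ
  set t := τ - 1 with ht
  have htpos : 1 ≤ t := by omega
  have htcast : ((t : ℝ)) = (τ : ℝ) - 1 := by
    have h1 : (1:ℕ) ≤ τ := by omega
    push_cast [ht, Nat.cast_sub h1]; ring
  set q : ℝ := (𝓕.card : ℝ) ^ (-(1 : ℝ) / ((τ : ℝ) - 1)) with hq
  have hcard : (0:ℝ) < 𝓕.card := by exact_mod_cast hne.card_pos
  have hqpos : 0 < q := Real.rpow_pos_of_pos hcard _
  -- every (τ-1)-tuple misses some set of 𝓕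
  have hmiss : ∀ v : Fin t → α, ∃ F ∈ 𝓕, ∀ j, v j ∉ F := by
    intro v
    by_contra h
    push_neg at h
    have hcover : IsCover (univ.image v) 𝓕 := by
      intro A hA
      obtain ⟨j, hj⟩ := h A hA
      exact ⟨v j, mem_inter.2 ⟨mem_image_of_mem v (mem_univ j), hj⟩⟩
    have h2 : τ ≤ (univ.image v).card := Nat.sInf_le ⟨_, rfl, hcover⟩
    have h3 : (univ.image v).card ≤ t := le_trans (card_image_le) (by simp)
    omega
  set h : Finset α → α → ℝ := fun F y => if y ∈ F then 0 else g y with hh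
  have hD : ∀ F : Finset α, ∑ v : Fin t → α, ∏ j, h F (v j)
      = (1 - ∑ x ∈ F, g x) ^ t := by
    intro F
    rw [tuple_sum]
    congr 1
    have e : ∀ x : α, h F x = g x - (if x ∈ F then g x else 0) := by
      intro x; simp only [hh]; split <;> ring
    rw [Finset.sum_congr rfl (fun x _ => e x), Finset.sum_sub_distrib, hg1,
      ← Finset.sum_filter, Finset.filter_univ_mem]
  have hq_pow : q ^ t = (𝓕.card : ℝ)⁻¹ := by
    rw [hq, ← Real.rpow_natCast (_ ^ _) t, ← Real.rpow_mul hcard.le, htcast]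
    rw [div_mul_cancel₀, Real.rpow_neg_one]
    have : (1:ℝ) < τ := by exact_mod_cast (by omega : 1 < τ)
    intro hz; rw [sub_eq_zero] at hz; exact (by linarith : False)
  -- chain of inequalities
  have step1 : (1:ℝ) ≤ ∑ F ∈ 𝓕, (1 - ∑ x ∈ F, g x) ^ t := by
    calc (1:ℝ) = ∑ v : Fin t → α, ∏ j, g (v j) := by rw [tuple_sum, hg1, one_pow]
    _ ≤ ∑ v : Fin t → α, ∑ F ∈ 𝓕, ∏ j, h F (v j) := by
        apply Finset.sum_le_sum
        intro v _
        obtain ⟨F₀, hF₀, hmissF⟩ := hmiss v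
        have e : ∏ j, g (v j) = ∏ j, h F₀ (v j) := by
          apply Finset.prod_congr rfl
          intro j _
          simp [hh, hmissF j]
        rw [e]
        have hnn : ∀ F ∈ 𝓕, 0 ≤ ∏ j, h F (v j) := by
          intro F _
          apply Finset.prod_nonneg
          intro j _
          show 0 ≤ if v j ∈ F then 0 else g (v j)
          split <;> simp [hg0]
        exact Finset.single_le_sum hnn hF₀
    _ = ∑ F ∈ 𝓕, ∑ v : Fin t → α, ∏ j, h F (v j) := Finset.sum_comm
    _ = ∑ F ∈ 𝓕, (1 - ∑ x ∈ F, g x) ^ t := by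
        exact Finset.sum_congr rfl fun F _ => hD F
  have step2 : ∑ F ∈ 𝓕, (1 - ∑ x ∈ F, g x) ^ t < ∑ F ∈ 𝓕, q ^ t := by
    apply Finset.sum_lt_sum_of_nonempty hne
    intro F hF
    have hle : ∑ x ∈ F, g x ≤ 1 := by
      rw [← hg1]
      exact Finset.sum_le_sum_of_subset_of_nonneg (subset_univ F) (fun x _ _ => hg0 x)
    have h1 : 1 - ∑ x ∈ F, g x < q := by have := hcon F hF; linarith
    have h0 : 0 ≤ 1 - ∑ x ∈ F, g x := by linarith
    exact pow_lt_pow_left₀ h1 h0 (by omega)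
  rw [Finset.sum_const, hq_pow, nsmul_eq_mul, mul_inv_cancel₀ hcard.ne'] at step2
  linarith

theorem stmt9 [Fintype α] [DecidableEq α] (l : ℕ) (f : Fin l → α → ℝ)
    (hf0 : ∀ i x, 0 ≤ f i x) (hfne : ∀ i, f i ≠ 0)
    (𝓕 : Finset (Finset α)) (hne : 𝓕.Nonempty) (htau : 2 ≤ covNum 𝓕) :
    ∃ F ∈ 𝓕, ∀ i, ∑ x ∈ F, f i x ≤
      (∑ x, f i x) * l * (1 - (𝓕.card : ℝ) ^ (-(1 : ℝ) / ((covNum 𝓕 : ℝ) - 1))) := by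
  classical
  rcases Nat.eq_zero_or_pos l with hl | hl
  · obtain ⟨F, hF⟩ := hne
    subst hl
    exact ⟨F, hF, fun i => i.elim0⟩
  · have hl0 : (0:ℝ) < l := by exact_mod_cast hl
    set S : Fin l → ℝ := fun i => ∑ x, f i x with hS
    have hSpos : ∀ i, 0 < S i := by
      intro i
      obtain ⟨x, hx⟩ := Function.ne_iff.1 (hfne i)
      exact Finset.sum_pos' (fun y _ => hf0 i y)
        ⟨x, mem_univ x, lt_of_le_of_ne (hf0 i x) (Ne.symm hx)⟩
    set g : α → ℝ := fun x => (∑ i, f i x / S i) / l with hg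
    have hg0 : ∀ x, 0 ≤ g x := by
      intro x
      apply div_nonneg _ hl0.le
      exact Finset.sum_nonneg fun i _ => div_nonneg (hf0 i x) (hSpos i).le
    have hg1 : ∑ x, g x = 1 := by
      simp only [hg]
      rw [← Finset.sum_div, Finset.sum_comm]
      have e : ∀ i : Fin l, ∑ x, f i x / S i = 1 := by
        intro i
        rw [← Finset.sum_div, div_self (hSpos i).ne']
      rw [Finset.sum_congr rfl (fun i _ => e i)]
      simp [div_self hl0.ne']
    obtain ⟨F, hF, hFb⟩ := key_s9 g hg0 hg1 𝓕 hne htau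
    refine ⟨F, hF, fun i => ?_⟩
    have h1 : (∑ x ∈ F, f i x) / S i / (l : ℝ) ≤ ∑ x ∈ F, g x := by
      rw [Finset.sum_div, Finset.sum_div]
      apply Finset.sum_le_sum
      intro x _
      show f i x / S i / (l:ℝ) ≤ (∑ j, f j x / S j) / (l:ℝ)
      gcongr
      exact Finset.single_le_sum
        (fun j _ => div_nonneg (hf0 j x) (hSpos j).le) (mem_univ i)
    have h2 : (∑ x ∈ F, f i x) / S i / (l : ℝ)
        ≤ 1 - (𝓕.card : ℝ) ^ (-(1 : ℝ) / ((covNum 𝓕 : ℝ) - 1)) := h1.trans hFb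
    rw [div_div, div_le_iff₀ (mul_pos (hSpos i) hl0)] at h2
    calc ∑ x ∈ F, f i x
        ≤ (1 - (𝓕.card : ℝ) ^ (-(1 : ℝ) / ((covNum 𝓕 : ℝ) - 1))) * (S i * l) := h2
      _ = (∑ x, f i x) * l * (1 - (𝓕.card : ℝ) ^ (-(1 : ℝ) / ((covNum 𝓕 : ℝ) - 1))) := by
          rw [hS]; ring
end

section
/- Let $n\ge 1$, $l,t\ge 1$, and let $\mathcal{F}\subseteq\mathcal{A}$ be a subfamily of an $n$-uniform family $\mathcal{A}$ with $\tau(\mathcal{A}\setminus\mathcal{F})\ge t+1$. Then there exists $A\in\mathcal{A}\setminus\mathcal{F}$ such that, setting $\mathcal{F}'=\mathcal{F}\cup\{A\}$, for every $i=1,\dots,l$: $d^i_{\mathcal{F}'}\le d^i_{\mathcal{F}}+\frac{l\log|\mathcal{A}|}{t}\,2^i\,d^{i-1}_{\mathcal{F}}+n$, where $d^i_{\mathcal{G}}=\sum_{x\in X}d_{\mathcal{G}}(x)^i$ and $d_{\mathcal{G}}(x)$ is the number of sets of $\mathcal{G}$ containing $x$. -/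
open Finset

variable {α : Type*}

/-- `d^i_𝓖 = ∑_{x ∈ X} d_𝓖(x)^i`, where `d_𝓖(x)` is the degree of `x` in `𝓖`. -/
noncomputable def degPow [Fintype α] [DecidableEq α] (𝓖 : Finset (Finset α)) (i : ℕ) : ℝ :=
  ∑ x, ((𝓖.filter (fun F => x ∈ F)).card : ℝ) ^ i

lemma covNum_le [DecidableEq α] {C : Finset α} {𝓕 : Finset (Finset α)}
    (h : IsCover C 𝓕) : covNum 𝓕 ≤ C.card :=
  Nat.sInf_le ⟨C, rfl, h⟩

lemma natPow_succ_le (d i : ℕ) (hi : 1 ≤ i) : (d + 1) ^ i ≤ d ^ i + 2 ^ i * d ^ (i - 1) + 1 := by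
  rcases Nat.eq_zero_or_pos d with rfl | hd
  · simpa using Nat.le_add_left 1 (0 ^ i + 2 ^ i * 0 ^ (i - 1))
  · have h1 : (d + 1) ^ i = ∑ k ∈ Finset.range (i + 1), d ^ k * 1 ^ (i - k) * i.choose k :=
      add_pow d 1 i
    rw [Finset.sum_range_succ] at h1
    simp only [one_pow, mul_one, Nat.choose_self] at h1
    have h2 : ∑ k ∈ Finset.range i, d ^ k * i.choose k ≤
        ∑ k ∈ Finset.range i, d ^ (i - 1) * i.choose k := by
      apply Finset.sum_le_sum
      intro k hk
      exact Nat.mul_le_mul_right _ (Nat.pow_le_pow_right hd (by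
        have := Finset.mem_range.mp hk; omega))
    have h3 : ∑ k ∈ Finset.range i, d ^ (i - 1) * i.choose k ≤
        d ^ (i - 1) * 2 ^ i := by
      rw [← Finset.mul_sum]
      apply Nat.mul_le_mul_left
      calc ∑ k ∈ Finset.range i, i.choose k ≤ ∑ k ∈ Finset.range (i + 1), i.choose k :=
            Finset.sum_le_sum_of_subset (Finset.range_subset_range.mpr (by omega))
        _ = 2 ^ i := Nat.sum_range_choose i
    have : d ^ (i - 1) * 2 ^ i = 2 ^ i * d ^ (i - 1) := Nat.mul_comm _ _
    omega

lemma realPow_succ_le (d i : ℕ) (hi : 1 ≤ i) :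
    ((d : ℝ) + 1) ^ i ≤ (d : ℝ) ^ i + 2 ^ i * (d : ℝ) ^ (i - 1) + 1 := by
  exact_mod_cast natPow_succ_le d i hi

lemma exists_heavy_point [Fintype α] [DecidableEq α] (𝓗 : Finset (Finset α))
    (h𝓗 : 𝓗.Nonempty) (w : α → ℝ) (hw : ∀ x, 0 ≤ w x) (θ : ℝ)
    (hA : ∀ A ∈ 𝓗, θ * (∑ x, w x) < ∑ x ∈ A, w x) :
    ∃ x : α, θ * 𝓗.card < ((𝓗.filter (fun A => x ∈ A)).card : ℝ) := by
  by_contra hcon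
  push_neg at hcon
  have key : ∑ A ∈ 𝓗, ∑ x ∈ A, w x = ∑ x, w x * ((𝓗.filter (fun A => x ∈ A)).card : ℝ) := by
    have : ∀ A ∈ 𝓗, ∑ x ∈ A, w x = ∑ x, if x ∈ A then w x else 0 := by
      intro A _
      rw [Finset.sum_ite_mem, Finset.univ_inter]
    rw [Finset.sum_congr rfl this, Finset.sum_comm]
    apply Finset.sum_congr rfl
    intro x _
    rw [← Finset.sum_filter, Finset.sum_const, nsmul_eq_mul, mul_comm]
  have h1 : (𝓗.card : ℝ) * (θ * ∑ x, w x) < ∑ A ∈ 𝓗, ∑ x ∈ A, w x := by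
    have := Finset.sum_lt_sum_of_nonempty h𝓗 hA
    simpa using this
  have h2 : ∑ x, w x * ((𝓗.filter (fun A => x ∈ A)).card : ℝ) ≤
      ∑ x, w x * (θ * 𝓗.card) := by
    apply Finset.sum_le_sum
    intro x _
    exact mul_le_mul_of_nonneg_left (hcon x) (hw x)
  rw [key] at h1
  rw [← Finset.sum_mul] at h2
  nlinarith [h1, h2]

lemma exists_low_weight [Fintype α] [DecidableEq α] (t : ℕ) (ht : 1 ≤ t)
    (𝓖 : Finset (Finset α)) (h𝓖 : 𝓖.Nonempty) (w : α → ℝ) (hw : ∀ x, 0 ≤ w x)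
    (hwX : 0 < ∑ x, w x) (htau : t + 1 ≤ covNum 𝓖) :
    ∃ A ∈ 𝓖, ∑ x ∈ A, w x ≤ (Real.log 𝓖.card / t) * ∑ x, w x := by
  by_contra hcon
  push_neg at hcon
  set θ : ℝ := Real.log 𝓖.card / t with hθdef
  have hA : ∀ A ∈ 𝓖, θ * (∑ x, w x) < ∑ x ∈ A, w x := fun A hA => hcon A hA
  have hθ1 : θ < 1 := by
    obtain ⟨A, hAmem⟩ := h𝓖
    have h1 := hA A hAmem
    have h2 : ∑ x ∈ A, w x ≤ ∑ x, w x :=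
      Finset.sum_le_sum_of_subset_of_nonneg (Finset.subset_univ A) (fun x _ _ => hw x)
    nlinarith
  have hθ0 : 0 ≤ θ := by
    apply div_nonneg (Real.log_natCast_nonneg _)
    positivity
  have Q : ∀ k, 1 ≤ k → ∃ C : Finset α, C.card ≤ k ∧
      (((𝓖.filter (fun A => C ∩ A = ∅)).card : ℝ) < (1 - θ) ^ k * 𝓖.card) := by
    intro k hk
    induction k with
    | zero => omega
    | succ k ih =>
      rcases Nat.eq_zero_or_pos k with rfl | hkpos
      · obtain ⟨x, hx⟩ := exists_heavy_point 𝓖 h𝓖 w hw θ hA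
        refine ⟨{x}, by simp, ?_⟩
        have heq : 𝓖.filter (fun A => {x} ∩ A = ∅) = 𝓖.filter (fun A => x ∉ A) := by
          apply Finset.filter_congr
          intro A _
          simp [Finset.eq_empty_iff_forall_notMem]
        rw [heq]
        have hcard := Finset.card_filter_add_card_filter_not
          (s := 𝓖) (p := fun A => x ∈ A)
        have h2 : ((𝓖.filter (fun A => x ∉ A)).card : ℝ)
            = (𝓖.card : ℝ) - ((𝓖.filter (fun A => x ∈ A)).card : ℝ) := by
          push_cast [← hcard]
          ring_nf
        rw [h2, pow_one]
        nlinarith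
      · obtain ⟨C, hCcard, hCbound⟩ := ih hkpos
        set 𝓗 := 𝓖.filter (fun A => C ∩ A = ∅) with h𝓗def
        rcases Finset.eq_empty_or_nonempty 𝓗 with hemp | hne
        · refine ⟨C, by omega, ?_⟩
          rw [← h𝓗def, hemp]
          have : (0:ℝ) < (1 - θ) ^ (k+1) * 𝓖.card := by
            apply mul_pos (pow_pos (by linarith) _)
            exact_mod_cast Finset.card_pos.mpr h𝓖
          simpa using this
        · have hsub : ∀ A ∈ 𝓗, θ * (∑ x, w x) < ∑ x ∈ A, w x := by
            intro A hAm
            exact hA A (Finset.mem_filter.mp hAm).1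
          obtain ⟨x, hx⟩ := exists_heavy_point 𝓗 hne w hw θ hsub
          refine ⟨insert x C, le_trans (Finset.card_insert_le _ _) (by omega), ?_⟩
          have heq : 𝓖.filter (fun A => insert x C ∩ A = ∅) = 𝓗.filter (fun A => x ∉ A) := by
            rw [h𝓗def, Finset.filter_filter]
            apply Finset.filter_congr
            intro A _
            simp only [Finset.eq_empty_iff_forall_notMem, Finset.mem_inter, Finset.mem_insert]
            constructor
            · intro h; exact ⟨fun y hy => h y ⟨Or.inr hy.1, hy.2⟩, fun hxA => h x ⟨Or.inl rfl, hxA⟩⟩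
            · rintro ⟨h1, h2⟩ y ⟨hy1 | hy1, hy2⟩
              · exact h2 (hy1 ▸ hy2)
              · exact h1 y ⟨hy1, hy2⟩
          rw [heq]
          have hcard := Finset.card_filter_add_card_filter_not
            (s := 𝓗) (p := fun A => x ∈ A)
          have h2 : ((𝓗.filter (fun A => x ∉ A)).card : ℝ)
              = (𝓗.card : ℝ) - ((𝓗.filter (fun A => x ∈ A)).card : ℝ) := by
            push_cast [← hcard]
            ring_nf
          rw [h2]
          have hHle : (𝓗.card : ℝ) ≤ (1 - θ) ^ k * 𝓖.card := le_of_lt hCbound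
          have h1θ : (0:ℝ) ≤ 1 - θ := by linarith
          calc (𝓗.card : ℝ) - ((𝓗.filter (fun A => x ∈ A)).card : ℝ)
              < (𝓗.card : ℝ) - θ * 𝓗.card := by linarith
            _ = (1 - θ) * 𝓗.card := by ring
            _ ≤ (1 - θ) * ((1 - θ) ^ k * 𝓖.card) := by
                apply mul_le_mul_of_nonneg_left hHle h1θ
            _ = (1 - θ) ^ (k+1) * 𝓖.card := by ring
  obtain ⟨C, hCcard, hCbound⟩ := Q t ht
  have hexp : (1 - θ) ^ t * (𝓖.card : ℝ) ≤ 1 := by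
    have h1 : (1 - θ) ≤ Real.exp (-θ) := by
      have := Real.add_one_le_exp (-θ)
      linarith
    have h2 : (1 - θ) ^ t ≤ Real.exp (-θ) ^ t :=
      pow_le_pow_left₀ (by linarith) h1 t
    have h3 : Real.exp (-θ) ^ t = Real.exp (-(θ * t)) := by
      rw [← Real.exp_nat_mul]; ring_nf
    have h4 : θ * t = Real.log 𝓖.card := by
      rw [hθdef]
      field_simp
    have hcard1 : (1:ℝ) ≤ (𝓖.card : ℝ) := by
      exact_mod_cast Finset.card_pos.mpr h𝓖
    have h5 : Real.exp (-(θ * t)) = 1 / (𝓖.card : ℝ) := by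
      rw [h4, Real.exp_neg, Real.exp_log (by linarith)]
      ring
    calc (1 - θ) ^ t * (𝓖.card : ℝ) ≤ (1 / (𝓖.card : ℝ)) * (𝓖.card : ℝ) := by
          apply mul_le_mul_of_nonneg_right _ (by linarith)
          rw [← h5, ← h3]; exact h2
      _ = 1 := by field_simp
  have hempty : 𝓖.filter (fun A => C ∩ A = ∅) = ∅ := by
    have h6 : ((𝓖.filter (fun A => C ∩ A = ∅)).card : ℝ) < 1 := lt_of_lt_of_le hCbound hexp
    have h7 : (𝓖.filter (fun A => C ∩ A = ∅)).card = 0 := by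
      exact_mod_cast Nat.lt_one_iff.mp (by exact_mod_cast h6)
    exact Finset.card_eq_zero.mp h7
  have hcover : IsCover C 𝓖 := by
    intro A hAm
    rw [Finset.nonempty_iff_ne_empty]
    intro hc
    have : A ∈ 𝓖.filter (fun A => C ∩ A = ∅) := Finset.mem_filter.mpr ⟨hAm, hc⟩
    rw [hempty] at this
    exact absurd this (Finset.notMem_empty A)
  have := covNum_le hcover
  omega

theorem stmt11 [Fintype α] [DecidableEq α] (n l t : ℕ) (hn : 1 ≤ n) (hl : 1 ≤ l) (ht : 1 ≤ t)
    (𝓐 𝓕 : Finset (Finset α)) (hsub : 𝓕 ⊆ 𝓐) (hunif : ∀ A ∈ 𝓐, A.card = n)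
    (htau : t + 1 ≤ covNum (𝓐 \ 𝓕)) :
    ∃ A ∈ 𝓐 \ 𝓕, ∀ i, 1 ≤ i → i ≤ l →
      degPow (insert A 𝓕) i ≤ degPow 𝓕 i +
        ((l : ℝ) * Real.log (𝓐.card) / t) * 2 ^ i * degPow 𝓕 (i - 1) + n := by
  classical
  set 𝓖 := 𝓐 \ 𝓕 with h𝓖def
  have h𝓖ne : 𝓖.Nonempty := by
    rcases Finset.eq_empty_or_nonempty 𝓖 with hemp | hne
    · exfalso
      have hcov : IsCover (∅ : Finset α) 𝓖 := by
        intro A hA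
        rw [hemp] at hA
        exact absurd hA (Finset.notMem_empty A)
      have := covNum_le hcov
      simp at this
      omega
    · exact hne
  obtain ⟨A₀, hA₀⟩ := h𝓖ne
  have hA₀𝓐 : A₀ ∈ 𝓐 := (Finset.mem_sdiff.mp hA₀).1
  have hA₀card : A₀.card = n := hunif A₀ hA₀𝓐
  obtain ⟨x₀, _⟩ := Finset.card_pos.mp (by omega : 0 < A₀.card)
  set d : α → ℕ := fun x => (𝓕.filter (fun F => x ∈ F)).card with hd
  set w : α → ℝ := fun x => ∑ j ∈ Finset.range l, (d x : ℝ) ^ j / degPow 𝓕 j with hwdef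
  have hDnonneg : ∀ j, 0 ≤ degPow 𝓕 j := fun j =>
    Finset.sum_nonneg (fun x _ => by positivity)
  have hw : ∀ x, 0 ≤ w x := fun x =>
    Finset.sum_nonneg (fun j _ => div_nonneg (by positivity) (hDnonneg j))
  have hWsum : ∑ x, w x = ∑ j ∈ Finset.range l, degPow 𝓕 j / degPow 𝓕 j := by
    rw [hwdef, Finset.sum_comm]
    apply Finset.sum_congr rfl
    intro j _
    rw [degPow, Finset.sum_div]
  have hD0 : 0 < degPow 𝓕 0 := by
    rw [degPow]
    simp only [pow_zero]
    rw [Finset.sum_const, nsmul_eq_mul, mul_one]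
    have : 0 < Fintype.card α := Fintype.card_pos_iff.mpr ⟨x₀⟩
    exact_mod_cast this
  have hWpos : 0 < ∑ x, w x := by
    rw [hWsum]
    apply Finset.sum_pos'
    · intro j _
      exact div_nonneg (hDnonneg j) (hDnonneg j)
    · exact ⟨0, Finset.mem_range.mpr (by omega), by rw [div_self (ne_of_gt hD0)]; norm_num⟩
  have hWle : (∑ x, w x) ≤ l := by
    rw [hWsum]
    calc ∑ j ∈ Finset.range l, degPow 𝓕 j / degPow 𝓕 j
        ≤ ∑ _j ∈ Finset.range l, (1:ℝ) := by
          apply Finset.sum_le_sum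
          intro j _
          rcases eq_or_lt_of_le (hDnonneg j) with h0 | hpos
          · rw [← h0]; norm_num
          · rw [div_self (ne_of_gt hpos)]
      _ = l := by simp
  have h𝓖ne' : 𝓖.Nonempty := ⟨A₀, hA₀⟩
  obtain ⟨A, hAmem, hAw⟩ := exists_low_weight t ht 𝓖 h𝓖ne' w hw hWpos htau
  refine ⟨A, hAmem, ?_⟩
  have hA𝓐 : A ∈ 𝓐 := (Finset.mem_sdiff.mp hAmem).1
  have hAn : A.card = n := hunif A hA𝓐
  have hA𝓕 : A ∉ 𝓕 := (Finset.mem_sdiff.mp hAmem).2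
  set c : ℝ := (l : ℝ) * Real.log 𝓐.card / t with hc
  have hcnn : 0 ≤ c := by
    apply div_nonneg (mul_nonneg (by positivity) (Real.log_natCast_nonneg _)) (by positivity)
  have hlog : Real.log 𝓖.card ≤ Real.log 𝓐.card := by
    apply Real.log_le_log
    · exact_mod_cast Finset.card_pos.mpr ⟨A, hAmem⟩
    · exact_mod_cast Finset.card_le_card (Finset.sdiff_subset)
  have hlogG : 0 ≤ Real.log (𝓖.card : ℝ) := Real.log_natCast_nonneg _
  have hlogA : 0 ≤ Real.log (𝓐.card : ℝ) := Real.log_natCast_nonneg _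
  have ht0 : (0:ℝ) < t := by exact_mod_cast ht
  have hj : ∀ j, j < l → (∑ x ∈ A, (d x : ℝ) ^ j) ≤ c * degPow 𝓕 j := by
    intro j hjl
    rcases eq_or_lt_of_le (hDnonneg j) with h0 | hpos
    · have hall : ∀ x ∈ A, (d x : ℝ) ^ j = 0 := by
        intro x _
        have h := (Finset.sum_eq_zero_iff_of_nonneg
          (fun x (_ : x ∈ Finset.univ) => by positivity)).mp h0.symm
        exact h x (Finset.mem_univ x)
      rw [Finset.sum_eq_zero hall, ← h0]
      simp
    · have hterm : (∑ x ∈ A, (d x : ℝ) ^ j) / degPow 𝓕 j ≤ ∑ x ∈ A, w x := by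
        have hswap : ∑ x ∈ A, w x =
            ∑ j' ∈ Finset.range l, ∑ x ∈ A, (d x : ℝ) ^ j' / degPow 𝓕 j' := by
          rw [hwdef]; exact Finset.sum_comm
        rw [hswap, Finset.sum_div]
        exact Finset.single_le_sum
          (f := fun j' => ∑ x ∈ A, (d x : ℝ) ^ j' / degPow 𝓕 j')
          (fun j' _ => Finset.sum_nonneg (fun x _ => div_nonneg (by positivity) (hDnonneg j')))
          (Finset.mem_range.mpr hjl)
      have hkey : (∑ x ∈ A, (d x : ℝ) ^ j) ≤ ((Real.log 𝓖.card / t) * ∑ x, w x) * degPow 𝓕 j := by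
        rw [← div_le_iff₀ hpos]
        exact le_trans hterm hAw
      refine le_trans hkey ?_
      apply mul_le_mul_of_nonneg_right _ (hDnonneg j)
      have hmul : Real.log 𝓖.card * (∑ x, w x) ≤ Real.log 𝓐.card * l :=
        mul_le_mul hlog hWle (le_of_lt hWpos) hlogA
      rw [hc, div_mul_eq_mul_div, div_le_div_iff₀ ht0 ht0]
      nlinarith [hmul, ht0]
  intro i hi1 hil
  have hdeg : ∀ x : α, ((insert A 𝓕).filter (fun F => x ∈ F)).card
      = d x + (if x ∈ A then 1 else 0) := by
    intro x
    rw [Finset.filter_insert]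
    by_cases hxA : x ∈ A
    · rw [if_pos hxA, if_pos hxA, Finset.card_insert_of_notMem
        (fun h => hA𝓕 (Finset.mem_filter.mp h).1)]
    · rw [if_neg hxA, if_neg hxA, Nat.add_zero]
  have hpt : ∀ x : α, (((insert A 𝓕).filter (fun F => x ∈ F)).card : ℝ) ^ i ≤
      (d x : ℝ) ^ i + (if x ∈ A then (2:ℝ) ^ i * (d x : ℝ) ^ (i-1) + 1 else 0) := by
    intro x
    rw [hdeg x]
    by_cases hxA : x ∈ A
    · rw [if_pos hxA, if_pos hxA]
      push_cast
      have := realPow_succ_le (d x) i hi1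
      linarith
    · rw [if_neg hxA, if_neg hxA]
      simp
  have hsplit : ∑ x, ((d x : ℝ) ^ i + (if x ∈ A then (2:ℝ) ^ i * (d x : ℝ) ^ (i-1) + 1 else 0))
      = degPow 𝓕 i + ((2:ℝ) ^ i * ∑ x ∈ A, (d x : ℝ) ^ (i-1) + A.card) := by
    rw [Finset.sum_add_distrib]
    congr 1
    rw [Finset.sum_ite_mem, Finset.univ_inter, Finset.sum_add_distrib,
      ← Finset.mul_sum, Finset.sum_const, nsmul_eq_mul, mul_one]
  have hfin : degPow (insert A 𝓕) i ≤
      ∑ x, ((d x : ℝ) ^ i + (if x ∈ A then (2:ℝ) ^ i * (d x : ℝ) ^ (i-1) + 1 else 0)) :=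
    Finset.sum_le_sum (fun x (_ : x ∈ Finset.univ) => hpt x)
  rw [hsplit] at hfin
  have h2i : (0:ℝ) ≤ 2 ^ i := by positivity
  have hji := hj (i - 1) (by omega)
  have hmain : degPow (insert A 𝓕) i ≤ degPow 𝓕 i + ((2:ℝ)^i * (c * degPow 𝓕 (i-1)) + A.card) := by
    refine le_trans hfin ?_
    have := mul_le_mul_of_nonneg_left hji h2i
    linarith
  rw [hAn] at hmain
  calc degPow (insert A 𝓕) i ≤ degPow 𝓕 i + ((2:ℝ)^i * (c * degPow 𝓕 (i-1)) + n) := hmain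
    _ = degPow 𝓕 i + c * 2^i * degPow 𝓕 (i-1) + n := by ring
end
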